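/- At the round metric x = y = z = 1 (so s = 1), the linearization [[a,b,b],[b,a,b],[b,b,a]] of the normalized Ricci flow has a = −8(1+n) and b = 0; hence all eigenvalues are negative and the round metric is a stable node. -/

import Mathlib

noncomputable def rI (n : ℕ) (x y z s : ℝ) : ℝ :=
  2 * ((x^2 - y^2 - z^2) / (x*y*z)) + 4/x + 4*n*x/s^2

noncomputable def rJ (n : ℕ) (x y z s : ℝ) : ℝ :=
  2 * ((y^2 - x^2 - z^2) / (x*y*z)) + 4/y + 4*n*y/s^2

noncomputable def rK (n : ℕ) (x y z s : ℝ) : ℝ :=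
  2 * ((z^2 - x^2 - y^2) / (x*y*z)) + 4/z + 4*n*z/s^2

noncomputable def rH (n : ℕ) (x y z s : ℝ) : ℝ :=
  -2 * ((x + y + z) / s^2) + (4*n + 8)/s

noncomputable def Scal (n : ℕ) (x y z s : ℝ) : ℝ :=
  rI n x y z s + rJ n x y z s + rK n x y z s + 4*n * rH n x y z s

noncomputable def sVol (n : ℕ) (x y z : ℝ) : ℝ :=
  (x*y*z) ^ (-(1 / (4*(n:ℝ))))

/-- The normalized Ricci flow vector field in the coordinates `(x,y,z)` with
`s = (xyz)^{-1/(4n)}`. -/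
noncomputable def flowField (n : ℕ) (p : Fin 3 → ℝ) : Fin 3 → ℝ :=
  let x := p 0; let y := p 1; let z := p 2; let s := sVol n (p 0) (p 1) (p 2)
  ![-2 * x * (rI n x y z s - Scal n x y z s / (4*n + 3)),
    -2 * y * (rJ n x y z s - Scal n x y z s / (4*n + 3)),
    -2 * z * (rK n x y z s - Scal n x y z s / (4*n + 3))]

set_option maxHeartbeats 1000000

noncomputable def Pk (k : Fin 3) : (Fin 3 → ℝ) →L[ℝ] ℝ := ContinuousLinearMap.proj k

def pt : Fin 3 → ℝ := fun _ => (1:ℝ)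

noncomputable def cc (n : ℕ) : ℝ := -(1/(4*(n:ℝ)))

section helpers
variable {E : Type*} [NormedAddCommGroup E] [NormedSpace ℝ E]

theorem myInv {g : E → ℝ} {g' : E →L[ℝ] ℝ} {x : E} (hg : HasFDerivAt g g' x) (hx : g x ≠ 0) :
    HasFDerivAt (fun p => (g p)⁻¹) ((-((g x)^2)⁻¹) • g') x :=
  (hasDerivAt_inv hx).comp_hasFDerivAt x hg

theorem myDiv {f g : E → ℝ} {f' g' : E →L[ℝ] ℝ} {x : E} (hf : HasFDerivAt f f' x)
    (hg : HasFDerivAt g g' x) (hx : g x ≠ 0) :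
    HasFDerivAt (fun p => f p / g p) ((g x)⁻¹ • f' + (-(((g x)^2)⁻¹) * f x) • g') x := by
  simp only [div_eq_mul_inv]
  refine (hf.mul (myInv hg hx)).congr_fderiv ?_
  ext v; simp; ring

theorem myPow {g : E → ℝ} {g' : E →L[ℝ] ℝ} {x : E} (hg : HasFDerivAt g g' x) (m : ℕ) :
    HasFDerivAt (fun p => (g p) ^ m) (((m : ℝ) * (g x)^(m-1)) • g') x :=
  (hasDerivAt_pow m (g x)).comp_hasFDerivAt x hg

end helpers

/-- At the round metric `x = y = z = 1`, the linearization of the normalized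
Ricci flow has `a = −8(1+n)` on the diagonal and `b = 0` off-diagonal; since all
eigenvalues are negative, the round metric is a stable node. -/
theorem round_metric_stable (n : ℕ) (hn : 1 ≤ n) :
    (∀ i j : Fin 3,
      (fderiv ℝ (flowField n) (fun _ => (1:ℝ))) (Pi.single j 1) i
        = if i = j then -8 * (1 + (n:ℝ)) else 0)
    ∧ -8 * (1 + (n:ℝ)) < 0 := by
  have hn0 : (n:ℝ) ≠ 0 := Nat.cast_ne_zero.mpr (by omega)
  have hnn : (0:ℝ) ≤ (n:ℝ) := Nat.cast_nonneg n
  refine ⟨?_, by nlinarith⟩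
  have he : pt = (fun _ => (1:ℝ)) := rfl
  have hp : ∀ k, HasFDerivAt (fun p : Fin 3 → ℝ => p k) (Pk k) pt := fun k => hasFDerivAt_apply k pt
  -- the conformal factor s = (xyz)^cc n
  have hm : HasFDerivAt (fun p : Fin 3 → ℝ => p 0 * p 1 * p 2) (Pk 0 + Pk 1 + Pk 2) pt := by
    refine (((hp 0).mul (hp 1)).mul (hp 2)).congr_fderiv ?_
    ext v; simp [he]; ring
  have hs : HasFDerivAt (fun p : Fin 3 → ℝ => (p 0 * p 1 * p 2) ^ cc n)
      (cc n • (Pk 0 + Pk 1 + Pk 2)) pt := by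
    refine (hm.rpow_const (p := cc n) (Or.inl (by simp [he]))).congr_fderiv ?_
    ext v; simp [he, Real.one_rpow]
  -- generic Ricci eigenvalue component
  have hR : ∀ a b d : Fin 3, HasFDerivAt
      (fun p : Fin 3 → ℝ => rI n (p a) (p b) (p d) ((p 0 * p 1 * p 2) ^ cc n))
      ((2 + 4*(n:ℝ)) • Pk a + (-2:ℝ) • Pk b + (-2:ℝ) • Pk d
        + (-8*(n:ℝ)*cc n) • (Pk 0 + Pk 1 + Pk 2)) pt := by
    intro a b d
    simp only [rI]
    refine ((((myDiv (((myPow (hp a) 2).sub (myPow (hp b) 2)).sub (myPow (hp d) 2))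
        (((hp a).mul (hp b)).mul (hp d)) (by simp [he])).const_mul 2).add
      (myDiv (hasFDerivAt_const (4:ℝ) pt) (hp a) (by simp [he]))).add
      (myDiv ((hp a).const_mul (4*(n:ℝ))) (myPow hs 2)
        (by simp [he, Real.one_rpow]))).congr_fderiv ?_
    ext v
    simp [he, Real.one_rpow]
    ring
  -- rH component
  have hH : HasFDerivAt
      (fun p : Fin 3 → ℝ => rH n (p 0) (p 1) (p 2) ((p 0 * p 1 * p 2) ^ cc n))
      (((-2:ℝ) + (4 - 4*(n:ℝ))*cc n) • (Pk 0 + Pk 1 + Pk 2)) pt := by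
    simp only [rH]
    refine (((myDiv (((hp 0).add (hp 1)).add (hp 2)) (myPow hs 2)
        (by simp [he, Real.one_rpow])).const_mul (-2)).add
      (myDiv (hasFDerivAt_const ((4*(n:ℝ)+8)) pt) hs
        (by simp [he, Real.one_rpow]))).congr_fderiv ?_
    ext v
    simp [he, Real.one_rpow]
    ring
  -- scalar curvature
  have hrj : ∀ x y z s : ℝ, rJ n x y z s = rI n y x z s := by
    intro x y z s; simp only [rI, rJ]; ring
  have hrk : ∀ x y z s : ℝ, rK n x y z s = rI n z x y s := by
    intro x y z s; simp only [rI, rK]; ring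
  have hSc : HasFDerivAt
      (fun p : Fin 3 → ℝ => Scal n (p 0) (p 1) (p 2) ((p 0 * p 1 * p 2) ^ cc n))
      ((((-2:ℝ) - 4*(n:ℝ)) + (-8*(n:ℝ) - 16*(n:ℝ)^2)*cc n) • (Pk 0 + Pk 1 + Pk 2)) pt := by
    have hfun : (fun p : Fin 3 → ℝ => Scal n (p 0) (p 1) (p 2) ((p 0 * p 1 * p 2) ^ cc n))
        = fun p => rI n (p 0) (p 1) (p 2) ((p 0 * p 1 * p 2) ^ cc n)
          + rI n (p 1) (p 0) (p 2) ((p 0 * p 1 * p 2) ^ cc n)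
          + rI n (p 2) (p 0) (p 1) ((p 0 * p 1 * p 2) ^ cc n)
          + 4*(n:ℝ) * rH n (p 0) (p 1) (p 2) ((p 0 * p 1 * p 2) ^ cc n) := by
      funext p; simp only [Scal, hrj, hrk]
    rw [hfun]
    refine ((((hR 0 1 2).add (hR 1 0 2)).add (hR 2 0 1)).add
      (hH.const_mul (4*(n:ℝ)))).congr_fderiv ?_
    ext v
    simp
    ring
  -- components of the flow field
  have h43 : (4*(n:ℝ)+3) ≠ 0 := by positivity
  have hcomp : ∀ a b d : Fin 3, (∀ v : Fin 3 → ℝ, v 0 + v 1 + v 2 = v a + v b + v d) →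
      HasFDerivAt
      (fun p : Fin 3 → ℝ => -2 * p a * (rI n (p a) (p b) (p d) ((p 0 * p 1 * p 2) ^ cc n)
        - Scal n (p 0) (p 1) (p 2) ((p 0 * p 1 * p 2) ^ cc n) / (4*(n:ℝ) + 3)))
      ((-8*(1+(n:ℝ))) • Pk a) pt := by
    intro a b d hsum
    refine (((hp a).const_mul (-2)).mul ((hR a b d).sub
      (myDiv hSc (hasFDerivAt_const (4*(n:ℝ)+3) pt) h43))).congr_fderiv ?_
    ext v
    have hv := hsum v
    simp only [Pk, ContinuousLinearMap.proj_apply] at hv ⊢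
    simp [he, rI, rJ, rK, rH, Scal, Real.one_rpow, cc, Pk]
    field_simp
    linear_combination (-(64*(n:ℝ) + 48)) * hv
  -- assemble the full derivative
  have hfull : HasFDerivAt (flowField n)
      (ContinuousLinearMap.pi (fun i => (-8*(1+(n:ℝ))) • Pk i)) pt := by
    refine hasFDerivAt_pi'' ?_
    intro i
    rw [ContinuousLinearMap.proj_pi]
    fin_cases i
    · show HasFDerivAt (fun x : Fin 3 → ℝ => flowField n x 0) _ pt
      have hfun : (fun x : Fin 3 → ℝ => flowField n x 0)
          = (fun p : Fin 3 → ℝ => -2 * p 0 * (rI n (p 0) (p 1) (p 2) ((p 0 * p 1 * p 2) ^ cc n)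
            - Scal n (p 0) (p 1) (p 2) ((p 0 * p 1 * p 2) ^ cc n) / (4*(n:ℝ) + 3))) := by
        funext p; simp [flowField, sVol, cc]
      rw [hfun]
      exact hcomp 0 1 2 (fun v => rfl)
    · show HasFDerivAt (fun x : Fin 3 → ℝ => flowField n x 1) _ pt
      have hfun : (fun x : Fin 3 → ℝ => flowField n x 1)
          = (fun p : Fin 3 → ℝ => -2 * p 1 * (rI n (p 1) (p 0) (p 2) ((p 0 * p 1 * p 2) ^ cc n)
            - Scal n (p 0) (p 1) (p 2) ((p 0 * p 1 * p 2) ^ cc n) / (4*(n:ℝ) + 3))) := by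
        funext p; simp [flowField, sVol, cc, hrj]
      rw [hfun]
      exact hcomp 1 0 2 (fun v => by ring)
    · show HasFDerivAt (fun x : Fin 3 → ℝ => flowField n x 2) _ pt
      have hfun : (fun x : Fin 3 → ℝ => flowField n x 2)
          = (fun p : Fin 3 → ℝ => -2 * p 2 * (rI n (p 2) (p 0) (p 1) ((p 0 * p 1 * p 2) ^ cc n)
            - Scal n (p 0) (p 1) (p 2) ((p 0 * p 1 * p 2) ^ cc n) / (4*(n:ℝ) + 3))) := by
        funext p; simp [flowField, sVol, cc, hrk]
      rw [hfun]
      exact hcomp 2 0 1 (fun v => by ring)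
  intro i j
  rw [show fderiv ℝ (flowField n) (fun _ => (1:ℝ))
      = ContinuousLinearMap.pi (fun i => (-8*(1+(n:ℝ))) • Pk i) from hfull.fderiv]
  simp [ContinuousLinearMap.pi_apply, Pk, Pi.single_apply]
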